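/- For every a ∈ (0,1) and b ≥ 1, the function f_{a,b}(x) = (1/2)log(1 − a) − (2b/a)x² + x² + x√(1 + x²) + arcsinh(x) satisfies f_{a,b}(x) ≤ 0 for all real x, and its maximum value is 0 if and only if b = 1. -/

import Mathlib

open Real

lemma key_nonpos (a : ℝ) (ha0 : 0 < a) (ha1 : a < 1) (x : ℝ) :
    (1 / 2) * Real.log (1 - a) - (2 / a) * x ^ 2 + x ^ 2
      + x * Real.sqrt (1 + x ^ 2) + Real.arsinh x ≤ 0 := by
  have h1a : 0 < 1 - a := by linarith
  set s := Real.sqrt (1 + x ^ 2) with hs_def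
  have hs2 : s ^ 2 = 1 + x ^ 2 := Real.sq_sqrt (by positivity)
  have hs0 : 0 < s := Real.sqrt_pos.2 (by positivity)
  have habs : |x| ≤ s := by
    rw [hs_def, ← Real.sqrt_sq_eq_abs]
    exact Real.sqrt_le_sqrt (by linarith)
  have hu0 : 0 < x + s := by
    rcases lt_or_ge x 0 with h | h
    · nlinarith [neg_abs_le x]
    · linarith
  have harsinh : Real.arsinh x = Real.log (x + s) := rfl
  have hlog : Real.log ((1 - a) * (x + s) ^ 2) ≤ (1 - a) * (x + s) ^ 2 - 1 :=
    Real.log_le_sub_one_of_pos (by positivity)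
  have hlogeq : Real.log ((1 - a) * (x + s) ^ 2) = Real.log (1 - a) + 2 * Real.log (x + s) := by
    rw [Real.log_mul (by positivity) (by positivity), Real.log_pow]
    push_cast; ring
  have hdiv : (2 / a) * x ^ 2 * a = 2 * x ^ 2 := by field_simp
  have hfac : (x + s) ^ 2 - 1 = 2 * x * (x + s) := by nlinarith
  have hlog' : a * Real.log ((1 - a) * (x + s) ^ 2)
      ≤ a * ((1 - a) * (x + s) ^ 2 - 1) :=
    mul_le_mul_of_nonneg_left hlog ha0.le
  have h4x : 4 * x ^ 2 * (x + s) ^ 2 = ((x + s) ^ 2 - 1) ^ 2 := by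
    rw [hfac]; ring
  have hu2 : 0 < (x + s) ^ 2 := by positivity
  have hE : (a * (1 - a) * (x + s) ^ 2 / 2 - a / 2 + a * ((x + s) ^ 2 - 1) / 2 - 2 * x ^ 2)
      * (2 * (x + s) ^ 2) = -((1 - a) * (x + s) ^ 2 - 1) ^ 2 := by
    linear_combination -h4x
  have hP : a * (1 - a) * (x + s) ^ 2 / 2 - a / 2 + a * ((x + s) ^ 2 - 1) / 2 - 2 * x ^ 2 ≤ 0 := by
    nlinarith [hE, sq_nonneg ((1 - a) * (x + s) ^ 2 - 1), hu2]
  have hfaca : a * ((x + s) ^ 2 - 1) = a * (2 * x * (x + s)) := by rw [hfac]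
  have hlogeqa : a * Real.log ((1 - a) * (x + s) ^ 2)
      = a * Real.log (1 - a) + 2 * a * Real.log (x + s) := by rw [hlogeq]; ring
  rw [harsinh]
  nlinarith [hlog', hP, hfaca, hlogeqa, hdiv, ha0]

/-- For `a ∈ (0,1)` and `b ≥ 1`, the function
`f(x) = (1/2)log(1-a) - (2b/a)x² + x² + x√(1+x²) + arcsinh(x)` is nonpositive on `ℝ`,
and its maximum value is `0` (i.e. the value `0` is attained) if and only if `b = 1`. -/
theorem f_ab_nonpos_and_zero_iff (a b : ℝ) (ha : a ∈ Set.Ioo (0 : ℝ) 1) (hb : 1 ≤ b) :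
    let f : ℝ → ℝ := fun x =>
      (1 / 2) * Real.log (1 - a) - (2 * b / a) * x ^ 2 + x ^ 2
        + x * Real.sqrt (1 + x ^ 2) + Real.arsinh x
    (∀ x, f x ≤ 0) ∧ ((∃ x, f x = 0) ↔ b = 1) := by
  obtain ⟨ha0, ha1⟩ := ha
  intro f
  have h1a : 0 < 1 - a := by linarith
  have hfg : ∀ x : ℝ, f x = ((1 / 2) * Real.log (1 - a) - (2 / a) * x ^ 2 + x ^ 2
      + x * Real.sqrt (1 + x ^ 2) + Real.arsinh x) - (2 * (b - 1) / a) * x ^ 2 := by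
    intro x
    simp only [f]
    field_simp
    ring
  have hbx : ∀ x : ℝ, 0 ≤ (2 * (b - 1) / a) * x ^ 2 := by
    intro x
    have : 0 ≤ b - 1 := by linarith
    positivity
  have hnonpos : ∀ x, f x ≤ 0 := by
    intro x
    rw [hfg x]
    have := key_nonpos a ha0 ha1 x
    have := hbx x
    linarith
  refine ⟨hnonpos, ?_, ?_⟩
  · -- ∃ x, f x = 0 → b = 1
    rintro ⟨x, hx⟩
    by_contra hb1
    have hb1' : 1 < b := lt_of_le_of_ne hb (Ne.symm hb1)
    have hxz : x = 0 := by
      by_contra hxz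
      have h1 : 0 < (2 * (b - 1) / a) * x ^ 2 := by
        have : (0:ℝ) < b - 1 := by linarith
        positivity
      have h2 := key_nonpos a ha0 ha1 x
      rw [hfg x] at hx
      linarith
    rw [hxz] at hx
    simp only [f] at hx
    have hlog : Real.log (1 - a) < 0 := Real.log_neg h1a (by linarith)
    simp [Real.arsinh_zero] at hx
    rcases hx with h | h | h <;> linarith
  · -- b = 1 → ∃ x, f x = 0
    rintro rfl
    set r := Real.sqrt (1 - a) with hr_def
    have hr0 : 0 < r := Real.sqrt_pos.2 h1a
    have hr2 : r ^ 2 = 1 - a := Real.sq_sqrt h1a.le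
    refine ⟨a / (2 * r), ?_⟩
    have hx2 : 1 + (a / (2 * r)) ^ 2 = ((2 - a) / (2 * r)) ^ 2 := by
      field_simp
      nlinarith [hr2]
    have hsqrt : Real.sqrt (1 + (a / (2 * r)) ^ 2) = (2 - a) / (2 * r) := by
      rw [hx2, Real.sqrt_sq (div_nonneg (by linarith) (by positivity))]
    have harsinh : Real.arsinh (a / (2 * r)) = -(1 / 2) * Real.log (1 - a) := by
      have : Real.arsinh (a / (2 * r)) = Real.log (a / (2 * r) + Real.sqrt (1 + (a / (2 * r)) ^ 2)) := rfl
      rw [this, hsqrt]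
      have hsum : a / (2 * r) + (2 - a) / (2 * r) = 1 / r := by
        field_simp
        ring
      rw [hsum]
      rw [one_div, Real.log_inv]
      have : Real.log (1 - a) = 2 * Real.log r := by
        rw [← hr2, Real.log_pow]; push_cast; ring
      rw [this]; ring
    simp only [f, hsqrt, harsinh]
    have hra : r ^ 2 = 1 - a := hr2
    field_simp
    nlinarith [hr2, hr0]
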